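/- For every natural transformation τ : A → B of functors A, B : S → Set, the induced natural transformation τ̂ : Â → B̂, defined by τ̂_X([x⃗, a]) = [x⃗, τ_n(a)], is semi-cartesian: all naturality squares at injective functions are pullbacks. -/

import Mathlib

/-- A functor from the skeleton `S` of finite sets and surjections to `Set`:
a family of sets with a functorial action of surjections. -/
structure SFunctor where
  obj : ℕ → Type
  map : ∀ {n m : ℕ} (f : Fin n → Fin m), Function.Surjective f → obj n → obj m
  map_id : ∀ {n : ℕ} (a : obj n), map id Function.surjective_id a = a
  map_map : ∀ {n m k : ℕ} (f : Fin n → Fin m) (hf : Function.Surjective f)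
      (g : Fin m → Fin k) (hg : Function.Surjective g) (a : obj n),
      map g hg (map f hf a) = map (g ∘ f) (hg.comp hf) a

/-- The relation identifying `(x⃗ ∘ σ, a)` with `(x⃗, σ · a)` for bijections `σ`,
on pairs of an injection `Fin n → X` and an element of `A(n)`. -/
def HatRel (A : SFunctor) (X : Type) :
    (Σ n : ℕ, {x : Fin n → X // Function.Injective x} × A.obj n) →
    (Σ n : ℕ, {x : Fin n → X // Function.Injective x} × A.obj n) → Prop :=
  fun p q => ∃ e : Fin p.1 ≃ Fin q.1,
    (∀ i, q.2.1.1 (e i) = p.2.1.1 i) ∧ A.map e e.surjective p.2.2 = q.2.2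

/-- `Â(X) = Σ_n [X over n] ⊗_{S_n} A(n)`. -/
def HatA (A : SFunctor) (X : Type) : Type := Quot (HatRel A X)

/-- The class `[x⃗, a]` in `Â(X)`. -/
def hatMk (A : SFunctor) {X : Type} {n : ℕ} (x : Fin n → X) (hx : Function.Injective x)
    (a : A.obj n) : HatA A X :=
  Quot.mk _ ⟨n, ⟨x, hx⟩, a⟩

/-- The characterizing property of the action of `Â` on functions:
`Â(f)([x⃗,a]) = [y⃗, A(α)(a)]` whenever `f ∘ x⃗ = y⃗ ∘ α` is an epi-mono factorization. -/
def HatMapSpec (A : SFunctor)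
    (F : ∀ (X Y : Type), (X → Y) → HatA A X → HatA A Y) : Prop :=
  ∀ (X Y : Type) (f : X → Y) (n m : ℕ) (x : Fin n → X) (hx : Function.Injective x)
    (a : A.obj n) (α : Fin n → Fin m) (hα : Function.Surjective α)
    (y : Fin m → Y) (hy : Function.Injective y),
    (∀ i, f (x i) = y (α i)) →
    F X Y f (hatMk A x hx a) = hatMk A y hy (A.map α hα a)

/-- A commutative square of sets which is a pullback (elementwise formulation). -/
def IsSetPullback {P A B C : Type} (pa : P → A) (pb : P → B) (f : A → C) (g : B → C) : Prop :=
  (∀ p, f (pa p) = g (pb p)) ∧ ∀ a b, f a = g b → ∃! p, pa p = a ∧ pb p = b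

/-- A commutative square of sets which is a weak pullback (elementwise formulation). -/
def IsWeakSetPullback {P A B C : Type} (pa : P → A) (pb : P → B) (f : A → C) (g : B → C) : Prop :=
  (∀ p, f (pa p) = g (pb p)) ∧ ∀ a b, f a = g b → ∃ p, pa p = a ∧ pb p = b

/-- Naturality of a family `τ n : A(n) → B(n)` with respect to surjections. -/
def SNatTrans (A B : SFunctor) (τ : ∀ n, A.obj n → B.obj n) : Prop :=
  ∀ (n m : ℕ) (f : Fin n → Fin m) (hf : Function.Surjective f) (a : A.obj n),
    τ m (A.map f hf a) = B.map f hf (τ n a)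

/-- The characterizing property of `τ̂ : Â → B̂`, namely `τ̂_X([x⃗,a]) = [x⃗, τ(a)]`. -/
def HatTransSpec (A B : SFunctor) (τ : ∀ n, A.obj n → B.obj n)
    (t : ∀ X : Type, HatA A X → HatA B X) : Prop :=
  ∀ (X : Type) (n : ℕ) (x : Fin n → X) (hx : Function.Injective x) (a : A.obj n),
    t X (hatMk A x hx a) = hatMk B x hx (τ n a)

lemma SFunctor.map_congr (A : SFunctor) {n m : ℕ} {f g : Fin n → Fin m}
    (hf : Function.Surjective f) (hg : Function.Surjective g) (h : f = g) (a : A.obj n) :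
    A.map f hf a = A.map g hg a := by subst h; rfl

lemma SFunctor.map_symm_map (A : SFunctor) {n m : ℕ} (e : Fin n ≃ Fin m) (a : A.obj n) :
    A.map e.symm e.symm.surjective (A.map e e.surjective a) = a := by
  rw [A.map_map, A.map_congr _ Function.surjective_id (by ext i; simp)]
  exact A.map_id a

lemma hatRel_equiv (A : SFunctor) (X : Type) : Equivalence (HatRel A X) := by
  constructor
  · rintro ⟨n, ⟨x, hx⟩, a⟩
    refine ⟨Equiv.refl _, fun i => rfl, ?_⟩
    rw [A.map_congr _ Function.surjective_id (by ext i; simp)]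
    exact A.map_id a
  · rintro ⟨n, ⟨x, hx⟩, a⟩ ⟨m, ⟨y, hy⟩, b⟩ ⟨e, h1, h2⟩
    refine ⟨e.symm, fun i => ?_, ?_⟩
    · rw [← h1 (e.symm i), e.apply_symm_apply]
    · rw [← h2]; exact A.map_symm_map e a
  · rintro ⟨n, ⟨x, hx⟩, a⟩ ⟨m, ⟨y, hy⟩, b⟩ ⟨k, ⟨z, hz⟩, c⟩ ⟨e1, h1, h2⟩ ⟨e2, h3, h4⟩
    refine ⟨e1.trans e2, fun i => ?_, ?_⟩
    · simpa using (h3 (e1 i)).trans (h1 i)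
    · rw [← h4, ← h2, A.map_map]
      exact A.map_congr _ _ (by ext i; simp) a

lemma hat_exact (A : SFunctor) (X : Type)
    {p q : Σ n : ℕ, {x : Fin n → X // Function.Injective x} × A.obj n}
    (h : (Quot.mk (HatRel A X) p : HatA A X) = Quot.mk (HatRel A X) q) :
    HatRel A X p q :=
  ((hatRel_equiv A X).eqvGen_iff).mp (Quot.eq.mp h)

/-- For every natural transformation `τ : A → B` of functors on `S`,
the induced transformation `τ̂ : Â → B̂` is semi-cartesian: naturality squares at
injections are pullbacks. -/
theorem hat_trans_semicartesian (A B : SFunctor)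
    (τ : ∀ n, A.obj n → B.obj n) (hτ : SNatTrans A B τ)
    (FA : ∀ (X Y : Type), (X → Y) → HatA A X → HatA A Y) (hFA : HatMapSpec A FA)
    (FB : ∀ (X Y : Type), (X → Y) → HatA B X → HatA B Y) (hFB : HatMapSpec B FB)
    (t : ∀ X : Type, HatA A X → HatA B X) (ht : HatTransSpec A B τ t)
    (X Y : Type) (f : X → Y) (hf : Function.Injective f) :
    IsSetPullback (t X) (FA X Y f) (FB X Y f) (t Y) := by
  have hFAeq : ∀ (n : ℕ) (x : Fin n → X) (hx : Function.Injective x) (a : A.obj n),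
      FA X Y f (hatMk A x hx a) = hatMk A (f ∘ x) (hf.comp hx) a := by
    intro n x hx a
    rw [hFA X Y f n n x hx a id Function.surjective_id (f ∘ x) (hf.comp hx) (fun i => rfl),
      A.map_id]
  have hFBeq : ∀ (n : ℕ) (x : Fin n → X) (hx : Function.Injective x) (b : B.obj n),
      FB X Y f (hatMk B x hx b) = hatMk B (f ∘ x) (hf.comp hx) b := by
    intro n x hx b
    rw [hFB X Y f n n x hx b id Function.surjective_id (f ∘ x) (hf.comp hx) (fun i => rfl),
      B.map_id]
  -- injectivity of FA X Y f
  have hFAinj : Function.Injective (FA X Y f) := by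
    intro p q
    induction p using Quot.ind with | _ p =>
    induction q using Quot.ind with | _ q =>
    obtain ⟨n, ⟨x, hx⟩, a⟩ := p
    obtain ⟨m, ⟨y, hy⟩, b⟩ := q
    intro h
    rw [show (Quot.mk _ ⟨n, ⟨x, hx⟩, a⟩ : HatA A X) = hatMk A x hx a from rfl,
      show (Quot.mk _ ⟨m, ⟨y, hy⟩, b⟩ : HatA A X) = hatMk A y hy b from rfl,
      hFAeq, hFAeq] at h
    obtain ⟨e, h1, h2⟩ := hat_exact A Y h
    exact Quot.sound ⟨e, fun i => hf (h1 i), h2⟩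
  constructor
  · -- commutativity
    intro p
    induction p using Quot.ind with | _ p =>
    obtain ⟨n, ⟨x, hx⟩, a⟩ := p
    rw [show (Quot.mk _ ⟨n, ⟨x, hx⟩, a⟩ : HatA A X) = hatMk A x hx a from rfl,
      ht, hFAeq, hFBeq, ht]
  · intro a b hab
    induction a using Quot.ind with | _ a =>
    induction b using Quot.ind with | _ b =>
    obtain ⟨n, ⟨x, hx⟩, b0⟩ := a
    obtain ⟨m, ⟨y, hy⟩, a0⟩ := b
    rw [show (Quot.mk _ ⟨n, ⟨x, hx⟩, b0⟩ : HatA B X) = hatMk B x hx b0 from rfl,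
      show (Quot.mk _ ⟨m, ⟨y, hy⟩, a0⟩ : HatA A Y) = hatMk A y hy a0 from rfl,
      hFBeq, ht] at hab
    obtain ⟨e, h1, h2⟩ := hat_exact B Y hab
    dsimp only at e h1 h2
    -- e : Fin n ≃ Fin m, y (e i) = f (x i), B.map e b0 = τ m a0
    refine ⟨hatMk A x hx (A.map e.symm e.symm.surjective a0), ⟨?_, ?_⟩, ?_⟩
    · rw [ht]
      congr 1
      rw [hτ, ← h2, B.map_symm_map]
    · rw [hFAeq]
      refine Quot.sound ⟨e, fun i => h1 i, ?_⟩
      rw [A.map_map, A.map_congr _ Function.surjective_id (by ext i; simp)]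
      exact A.map_id a0
    · rintro p ⟨hp1, hp2⟩
      apply hFAinj
      rw [hp2, hFAeq]
      refine Quot.sound ⟨e.symm, fun i => ?_, rfl⟩
      show (f ∘ x) (e.symm i) = y i
      rw [← h1 (e.symm i), e.apply_symm_apply]
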